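/- Let λ, q, d > 0 and set f = λd/(λ+q), and assume f > 1. For k ≥ 1 define δ(k) = λ + q - λk(1 - e^{-d/k}). Then δ is strictly decreasing in k on [1, ∞), and δ(k) < 0 if and only if k > k_c where k_c = ((q+λ)/λ)·f/(f + L₀(-f e^{-f})), with L₀ the principal Lambert-W branch. -/

import Mathlib

theorem stmt10 (lam q d : ℝ) (hlam : 0 < lam) (hq : 0 < q) (hd : 0 < d)
    (f : ℝ) (hf : f = lam * d / (lam + q)) (hf1 : 1 < f)
    (L0 : ℝ → ℝ)
    (hL0 : ∀ z : ℝ, -(1 / Real.exp 1) ≤ z → -1 ≤ L0 z ∧ L0 z * Real.exp (L0 z) = z)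
    (δ : ℝ → ℝ)
    (hδ : ∀ k, δ k = lam + q - lam * k * (1 - Real.exp (-d / k)))
    (kc : ℝ) (hkc : kc = ((q + lam) / lam) * f / (f + L0 (-f * Real.exp (-f)))) :
    StrictAntiOn δ (Set.Ici 1) ∧ ∀ k ≥ (1:ℝ), (δ k < 0 ↔ kc < k) := by
  have hlamq : 0 < lam + q := by linarith
  have hδ'' : δ = fun k => lam + q - lam * (k * (1 - Real.exp (-d / k))) := by
    funext k; rw [hδ]; ring
  -- derivative of δ
  have key : ∀ k : ℝ, 0 < k → HasDerivAt δ
      (-(lam * (1 * (1 - Real.exp (-d / k)) + k * -(Real.exp (-d / k) * (d / k ^ 2))))) k := by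
    intro k hk
    have h1 : HasDerivAt (fun x : ℝ => -d / x) (d / k ^ 2) k := by
      have h0 : HasDerivAt (fun x : ℝ => -d * x⁻¹) (-d * -(k ^ 2)⁻¹) k :=
        (hasDerivAt_inv hk.ne').const_mul (-d)
      have he : (fun x : ℝ => -d * x⁻¹) = fun x : ℝ => -d / x := by
        funext x; rw [div_eq_mul_inv]
      rw [he] at h0
      convert h0 using 1
      field_simp
    have h2 := h1.exp
    have h3 : HasDerivAt (fun x : ℝ => 1 - Real.exp (-d / x))
        (-(Real.exp (-d / k) * (d / k ^ 2))) k := h2.const_sub 1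
    have h4 := (hasDerivAt_id k).mul h3
    have h5 := h4.const_mul lam
    have h6 := h5.const_sub (lam + q)
    rw [hδ'']
    convert h6 using 1
    all_goals rfl
  have derivneg : ∀ k : ℝ, 0 < k →
      (-(lam * (1 * (1 - Real.exp (-d / k)) + k * -(Real.exp (-d / k) * (d / k ^ 2))))) < 0 := by
    intro k hk
    have hx : 0 < d / k := div_pos hd hk
    have hexp : (1 + d / k) * Real.exp (-(d / k)) < 1 := by
      rw [Real.exp_neg, ← div_eq_mul_inv, div_lt_one (Real.exp_pos _)]
      linarith [Real.add_one_lt_exp hx.ne']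
    have hEeq : Real.exp (-d / k) = Real.exp (-(d / k)) := by rw [neg_div]
    have hsum : 1 * (1 - Real.exp (-d / k)) + k * -(Real.exp (-d / k) * (d / k ^ 2))
        = 1 - (1 + d / k) * Real.exp (-(d / k)) := by
      rw [hEeq]; field_simp; ring
    rw [hsum]
    have : 0 < 1 - (1 + d / k) * Real.exp (-(d / k)) := by linarith
    nlinarith
  have hSA : StrictAntiOn δ (Set.Ici 1) := by
    apply strictAntiOn_of_deriv_neg (convex_Ici 1)
    · intro x hx
      have hx0 : (0:ℝ) < x := lt_of_lt_of_le one_pos hx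
      exact ((key x hx0).continuousAt).continuousWithinAt
    · intro x hx
      rw [interior_Ici] at hx
      have hx0 : (0:ℝ) < x := lt_trans one_pos hx
      rw [(key x hx0).deriv]
      exact derivneg x hx0
  refine ⟨hSA, ?_⟩
  -- set up Lambert W
  have hf0 : (0:ℝ) < f := by linarith
  set w := L0 (-f * Real.exp (-f)) with hwdef
  have hbound : -(1 / Real.exp 1) ≤ -f * Real.exp (-f) := by
    have h1 : f ≤ Real.exp (f - 1) := by linarith [Real.add_one_le_exp (f - 1)]
    have h2 : f * Real.exp (-f) ≤ 1 / Real.exp 1 := by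
      calc f * Real.exp (-f) ≤ Real.exp (f - 1) * Real.exp (-f) :=
            mul_le_mul_of_nonneg_right h1 (Real.exp_pos _).le
        _ = Real.exp (-1) := by rw [← Real.exp_add]; ring_nf
        _ = 1 / Real.exp 1 := by rw [Real.exp_neg, one_div]
    linarith
  obtain ⟨hw1, hw2⟩ := hL0 _ hbound
  have hwneg : w < 0 := by
    by_contra h
    push_neg at h
    have h1 : 0 ≤ w * Real.exp w := mul_nonneg h (Real.exp_pos _).le
    nlinarith [mul_pos hf0 (Real.exp_pos (-f))]
  have hfw : 0 < f + w := by linarith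
  have hd_eq : d = f * (lam + q) / lam := by
    have h1 : f * (lam + q) = lam * d := by rw [hf]; field_simp
    field_simp
    linarith
  have hkc_eq : kc = d / (f + w) := by
    rw [hkc, hd_eq]
    field_simp [hlam.ne', hfw.ne']
    ring
  have hkc1 : 1 < kc := by
    rw [hkc_eq, lt_div_iff₀ hfw]
    have hfd : f < d := by
      rw [hd_eq, lt_div_iff₀ hlam]
      nlinarith
    linarith
  have hkc0 : 0 < kc := by linarith
  have hexpfw : Real.exp (-(f + w)) = -w / f := by
    have h1 : Real.exp (-f) = -(w * Real.exp w) / f := by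
      field_simp
      linarith [hw2]
    calc Real.exp (-(f + w)) = Real.exp (-f) * Real.exp (-w) := by
          rw [← Real.exp_add]; ring_nf
      _ = -(w * Real.exp w) / f * Real.exp (-w) := by rw [h1]
      _ = -w / f * (Real.exp w * Real.exp (-w)) := by ring
      _ = -w / f := by rw [← Real.exp_add, add_neg_cancel, Real.exp_zero, mul_one]
  have hδkc : δ kc = 0 := by
    rw [hδ]
    have hdkc : -d / kc = -(f + w) := by rw [hkc_eq]; field_simp
    rw [hdkc, hexpfw, hkc_eq, hd_eq]
    field_simp
    ring
  intro k hk
  have hkmem : k ∈ Set.Ici (1:ℝ) := Set.mem_Ici.mpr hk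
  have hkcmem : kc ∈ Set.Ici (1:ℝ) := Set.mem_Ici.mpr hkc1.le
  constructor
  · intro hneg
    by_contra h
    push_neg at h
    rcases eq_or_lt_of_le h with heq | hlt
    · rw [heq, hδkc] at hneg; linarith
    · have := hSA hkmem hkcmem hlt
      rw [hδkc] at this
      linarith
  · intro hlt
    have := hSA hkcmem hkmem hlt
    rw [hδkc] at this
    linarith
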